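/- arXiv:1903.11460 — 4 statements merged into one kernel-verified Lean document; each statement's English description precedes it below -/
import Mathlib

section
/- Let X ∈ ℝ^{m×n}, b ∈ ℝ^m, p a norm on ℝⁿ, λ > 0, σ ≥ 0, τ ≥ 0, and let β̂ minimize F(β) = ‖Xβ − b‖ + λ p(β) + (σ/2)‖β‖² + (τ/2)‖Xβ − b‖² over ℝⁿ. If Xβ̂ ≠ b, then writing ε̂ = b − Xβ̂, for every β ∈ ℝⁿ one has λ p(β) ≥ λ p(β̂) + ⟨ Xᵀε̂/‖ε̂‖ − σβ̂ + τ Xᵀε̂, β − β̂ ⟩; equivalently, the vector −Xᵀ(Xβ̂ − b)/‖Xβ̂ − b‖ − σβ̂ − τXᵀ(Xβ̂ − b) is a subgradient of λp at β̂. -/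
open scoped RealInnerProductSpace

noncomputable section

/-- A function `p` is a norm on a real vector space. -/
def IsNorm {E : Type*} [AddCommGroup E] [Module ℝ E] (p : E → ℝ) : Prop :=
  (∀ x y, p (x + y) ≤ p x + p y) ∧ (∀ (c : ℝ) (x : E), p (c • x) = |c| * p x) ∧
    (∀ x, p x = 0 ↔ x = 0)

/-- The dual norm `q_*(z) = sup {⟨z, β⟩ : q β ≤ 1}`. -/
def dualNorm {ι : Type*} [Fintype ι] (q : EuclideanSpace ℝ ι → ℝ)
    (z : EuclideanSpace ℝ ι) : ℝ :=
  sSup {r : ℝ | ∃ β : EuclideanSpace ℝ ι, q β ≤ 1 ∧ r = ⟪z, β⟫}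

/-- `β_S`: the vector agreeing with `β` on `S` and zero on the complement. -/
def projS {n : ℕ} (S : Finset (Fin n)) (β : EuclideanSpace ℝ (Fin n)) :
    EuclideanSpace ℝ (Fin n) :=
  WithLp.toLp 2 (fun i => if i ∈ S then β i else 0)

/-- `β_{S̄}`: the vector agreeing with `β` on the complement of `S` and zero on `S`. -/
def projSc {n : ℕ} (S : Finset (Fin n)) (β : EuclideanSpace ℝ (Fin n)) :
    EuclideanSpace ℝ (Fin n) :=
  WithLp.toLp 2 (fun i => if i ∈ S then 0 else β i)

/-- `β^{S̄}`: the restriction of `β` to the complement of `S`. -/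
def restrC {n : ℕ} (S : Finset (Fin n)) (β : EuclideanSpace ℝ (Fin n)) :
    EuclideanSpace ℝ {i : Fin n // i ∉ S} :=
  WithLp.toLp 2 (fun (j : {i : Fin n // i ∉ S}) => β j.1)

/-- Matrix-vector multiplication as a map between Euclidean spaces. -/
def mulVecE {m n : ℕ} (X : Matrix (Fin m) (Fin n) ℝ) (β : EuclideanSpace ℝ (Fin n)) :
    EuclideanSpace ℝ (Fin m) :=
  WithLp.toLp 2 (X.mulVec β)

lemma mulVecE_add' {m n : ℕ} (X : Matrix (Fin m) (Fin n) ℝ)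
    (x y : EuclideanSpace ℝ (Fin n)) :
    mulVecE X (x + y) = mulVecE X x + mulVecE X y := by
  ext i
  simp [mulVecE, Matrix.mulVec, dotProduct, PiLp.add_apply, mul_add,
    Finset.sum_add_distrib]

lemma mulVecE_smul' {m n : ℕ} (X : Matrix (Fin m) (Fin n) ℝ) (t : ℝ)
    (x : EuclideanSpace ℝ (Fin n)) :
    mulVecE X (t • x) = t • mulVecE X x := by
  ext i
  simp only [mulVecE, Matrix.mulVec, dotProduct, PiLp.smul_apply, smul_eq_mul,
    Finset.mul_sum]
  exact Finset.sum_congr rfl fun j _ => by ring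

lemma inner_mulVecE_transpose' {m n : ℕ} (X : Matrix (Fin m) (Fin n) ℝ)
    (ε : EuclideanSpace ℝ (Fin m)) (d : EuclideanSpace ℝ (Fin n)) :
    ⟪mulVecE X.transpose ε, d⟫ = ⟪ε, mulVecE X d⟫ := by
  simp only [mulVecE, PiLp.inner_apply, RCLike.inner_apply, starRingEnd_apply, star_trivial,
    Matrix.mulVec, dotProduct, Matrix.transpose_apply, Finset.sum_mul, Finset.mul_sum]
  rw [Finset.sum_comm]
  exact Finset.sum_congr rfl fun i _ => Finset.sum_congr rfl fun j _ => by ring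

/-- subgradient inequality for the minimizer of the regularized
square-root regression problem. -/
theorem subgradient_at_minimizer {m n : ℕ} (X : Matrix (Fin m) (Fin n) ℝ)
    (b : EuclideanSpace ℝ (Fin m))
    (p : EuclideanSpace ℝ (Fin n) → ℝ) (hp : IsNorm p)
    (lam σ τ : ℝ) (hlam : 0 < lam) (hσ : 0 ≤ σ) (hτ : 0 ≤ τ)
    (βh : EuclideanSpace ℝ (Fin n))
    (hmin : ∀ β : EuclideanSpace ℝ (Fin n),
      ‖mulVecE X βh - b‖ + lam * p βh + σ / 2 * ‖βh‖ ^ 2 +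
          τ / 2 * ‖mulVecE X βh - b‖ ^ 2 ≤
        ‖mulVecE X β - b‖ + lam * p β + σ / 2 * ‖β‖ ^ 2 +
          τ / 2 * ‖mulVecE X β - b‖ ^ 2)
    (hfit : mulVecE X βh ≠ b)
    (εh : EuclideanSpace ℝ (Fin m)) (hεh : εh = b - mulVecE X βh) :
    ∀ β : EuclideanSpace ℝ (Fin n),
      lam * p βh +
          ⟪‖εh‖⁻¹ • mulVecE X.transpose εh - σ • βh + τ • mulVecE X.transpose εh,
            β - βh⟫ ≤
        lam * p β := by
  intro β
  set d : EuclideanSpace ℝ (Fin n) := β - βh with hd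
  set u : EuclideanSpace ℝ (Fin m) := mulVecE X βh - b with hu
  set w : EuclideanSpace ℝ (Fin m) := mulVecE X d with hw
  have hu0 : u ≠ 0 := sub_ne_zero.mpr hfit
  have hnu : 0 < ‖u‖ := norm_pos_iff.mpr hu0
  set c2 : ℝ := ⟪u, w⟫ with hc2
  set e2 : ℝ := ⟪βh, d⟫ with he2
  set D : ℝ := c2 / ‖u‖ + σ * e2 + τ * c2 with hD
  -- the quadratic expansions
  set q : ℝ → ℝ := fun t => ‖u‖ ^ 2 + 2 * c2 * t + ‖w‖ ^ 2 * t ^ 2 with hqdef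
  set r : ℝ → ℝ := fun t => ‖βh‖ ^ 2 + 2 * e2 * t + ‖d‖ ^ 2 * t ^ 2 with hrdef
  have hqsq : ∀ t : ℝ, ‖u + t • w‖ ^ 2 = q t := by
    intro t
    rw [hqdef]
    simp only [norm_add_sq_real, real_inner_smul_right, norm_smul, Real.norm_eq_abs,
      mul_pow, sq_abs]
    ring
  have hrsq : ∀ t : ℝ, ‖βh + t • d‖ ^ 2 = r t := by
    intro t
    rw [hrdef]
    simp only [norm_add_sq_real, real_inner_smul_right, norm_smul, Real.norm_eq_abs,
      mul_pow, sq_abs]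
    ring
  have hqnorm : ∀ t : ℝ, ‖u + t • w‖ = Real.sqrt (q t) := by
    intro t
    rw [← hqsq t, Real.sqrt_sq (norm_nonneg _)]
  -- the one-variable objective (without the p-term)
  set φ : ℝ → ℝ := fun t => Real.sqrt (q t) + σ / 2 * r t + τ / 2 * q t with hφdef
  -- linearity of mulVecE along the segment
  have hlin : ∀ t : ℝ, mulVecE X (βh + t • d) - b = u + t • w := by
    intro t
    rw [mulVecE_add', mulVecE_smul', hu, hw]
    abel
  -- derivative of φ at 0
  have hq' : HasDerivAt q (2 * c2) 0 := by
    have h1 : HasDerivAt (fun t : ℝ => 2 * c2 * t) (2 * c2) 0 := by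
      simpa using (hasDerivAt_id (0 : ℝ)).const_mul (2 * c2)
    have h2 : HasDerivAt (fun t : ℝ => ‖w‖ ^ 2 * t ^ 2) 0 0 := by
      have := (hasDerivAt_pow 2 (0 : ℝ)).const_mul (‖w‖ ^ 2)
      simpa using this
    have := (h1.const_add (‖u‖ ^ 2)).add h2
    exact this.congr_deriv (add_zero _)
  have hr' : HasDerivAt r (2 * e2) 0 := by
    have h1 : HasDerivAt (fun t : ℝ => 2 * e2 * t) (2 * e2) 0 := by
      simpa using (hasDerivAt_id (0 : ℝ)).const_mul (2 * e2)
    have h2 : HasDerivAt (fun t : ℝ => ‖d‖ ^ 2 * t ^ 2) 0 0 := by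
      have := (hasDerivAt_pow 2 (0 : ℝ)).const_mul (‖d‖ ^ 2)
      simpa using this
    have := (h1.const_add (‖βh‖ ^ 2)).add h2
    exact this.congr_deriv (add_zero _)
  have hq0 : q 0 = ‖u‖ ^ 2 := by simp [hqdef]
  have hq0ne : q 0 ≠ 0 := by
    rw [hq0]; positivity
  have hsqrt : HasDerivAt (fun t => Real.sqrt (q t)) (c2 / ‖u‖) 0 := by
    have := (Real.hasDerivAt_sqrt hq0ne).comp 0 hq'
    have hsq : Real.sqrt (q 0) = ‖u‖ := by rw [hq0, Real.sqrt_sq (norm_nonneg _)]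
    refine this.congr_deriv ?_
    rw [hsq]
    field_simp
  have hφ' : HasDerivAt φ D 0 := by
    have := (hsqrt.add (hr'.const_mul (σ / 2))).add (hq'.const_mul (τ / 2))
    have heq : c2 / ‖u‖ + σ / 2 * (2 * e2) + τ / 2 * (2 * c2) = D := by
      rw [hD]; ring
    rw [← heq]
    exact this
  -- key inequality for small positive t
  have hpadd := hp.1
  have hpsmul := hp.2.1
  have key : ∀ t : ℝ, t ∈ Set.Ioc (0 : ℝ) 1 →
      lam * p βh - lam * p β ≤ (φ t - φ 0) / t := by
    intro t ht
    have ht0 : 0 < t := ht.1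
    have ht1 : t ≤ 1 := ht.2
    have hφt : ∀ s : ℝ, φ s = ‖u + s • w‖ + σ / 2 * ‖βh + s • d‖ ^ 2 +
        τ / 2 * ‖u + s • w‖ ^ 2 := by
      intro s
      rw [hφdef]
      simp only
      rw [← hqsq s, ← hrsq s, Real.sqrt_sq (norm_nonneg _)]
    -- convexity bound on p
    have hcomb : βh + t • d = (1 - t) • βh + t • β := by
      rw [hd]; module
    have hpbound : p (βh + t • d) ≤ (1 - t) * p βh + t * p β := by
      rw [hcomb]
      calc p ((1 - t) • βh + t • β) ≤ p ((1 - t) • βh) + p (t • β) := hpadd _ _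
        _ = (1 - t) * p βh + t * p β := by
            rw [hpsmul, hpsmul, abs_of_nonneg (by linarith), abs_of_nonneg (le_of_lt ht0)]
    have hm := hmin (βh + t • d)
    rw [hlin t] at hm
    have h1 : φ 0 + lam * p βh ≤ φ t + lam * ((1 - t) * p βh + t * p β) := by
      rw [hφt 0, hφt t]
      simp only [zero_smul, add_zero]
      have := mul_le_mul_of_nonneg_left hpbound (le_of_lt hlam)
      linarith
    have h2 : t * (lam * p βh - lam * p β) ≤ φ t - φ 0 := by nlinarith
    rw [le_div_iff₀ ht0]
    linarith [h2]
  -- pass to the limit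
  have htend : Filter.Tendsto (fun t => (φ t - φ 0) / t) (nhdsWithin 0 (Set.Ioi 0)) (nhds D) := by
    have hslope := hasDerivAt_iff_tendsto_slope.mp hφ'
    have hmono : nhdsWithin (0 : ℝ) (Set.Ioi 0) ≤ nhdsWithin 0 {0}ᶜ :=
      nhdsWithin_mono 0 (fun x hx => ne_of_gt hx)
    have := hslope.mono_left hmono
    refine this.congr' ?_
    filter_upwards [self_mem_nhdsWithin] with t ht
    simp [slope_def_field]
  have hfinal : lam * p βh - lam * p β ≤ D := by
    refine ge_of_tendsto htend ?_
    filter_upwards [Ioc_mem_nhdsGT_of_mem (Set.left_mem_Ico.mpr one_pos)] with t ht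
    exact key t ht
  -- compute the inner product
  have hεu : εh = -u := by rw [hεh, hu]; abel
  have hA : ⟪mulVecE X.transpose εh, d⟫ = -c2 := by
    rw [inner_mulVecE_transpose', hεu, ← hw, inner_neg_left, hc2]
  have hinner : ⟪‖εh‖⁻¹ • mulVecE X.transpose εh - σ • βh + τ • mulVecE X.transpose εh,
      d⟫ = -D := by
    rw [inner_add_left, inner_sub_left, real_inner_smul_left, real_inner_smul_left,
      real_inner_smul_left, hA, ← he2, hεu, norm_neg, hD]
    field_simp
    ring
  rw [hinner]
  linarith
end
end

section
/- Let X ∈ ℝ^{m×n}, β⁰ ∈ ℝⁿ, ε ∈ ℝ^m, b = Xβ⁰ + ε, p a norm on ℝⁿ, λ > 0, σ ≥ 0, τ ≥ 0, and let β̂ minimize F(β) = ‖Xβ − b‖ + λ p(β) + (σ/2)‖β‖² + (τ/2)‖Xβ − b‖² over ℝⁿ. Set ε̂ = b − Xβ̂ and assume ‖ε̂‖ ≠ 0. Then ⟨ε̂, X(β⁰ − β̂)⟩ ≤ (τ + 1/‖ε̂‖)⁻¹ · ( λ p(β⁰) + σ p_*(β⁰) p(β̂) ), where p_* is the dual norm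 of p. -/
open scoped RealInnerProductSpace

noncomputable section

lemma isNorm_nonneg {n : ℕ} (p : EuclideanSpace ℝ (Fin n) → ℝ) (hp : IsNorm p)
    (x : EuclideanSpace ℝ (Fin n)) : 0 ≤ p x := by
  have h0 : p 0 = 0 := (hp.2.2 0).2 rfl
  have hneg : p (-x) = p x := by simpa using hp.2.1 (-1) x
  have h2 := hp.1 x (-x)
  rw [add_neg_cancel, h0] at h2
  linarith

lemma mulVecE_add_smul {m n : ℕ} (X : Matrix (Fin m) (Fin n) ℝ)
    (x y : EuclideanSpace ℝ (Fin n)) (a : ℝ) :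
    mulVecE X (x + a • y) = mulVecE X x + a • mulVecE X y := by
  ext i
  simp only [mulVecE, Matrix.mulVec, dotProduct, WithLp.ofLp_toLp, WithLp.ofLp_add,
    WithLp.ofLp_smul, Pi.add_apply, Pi.smul_apply, PiLp.add_apply, PiLp.smul_apply,
    smul_eq_mul, Finset.mul_sum, ← Finset.sum_add_distrib]
  apply Finset.sum_congr rfl
  intros; ring

lemma isNorm_upper {n : ℕ} (p : EuclideanSpace ℝ (Fin n) → ℝ) (hp : IsNorm p) :
    ∃ C, 0 ≤ C ∧ ∀ x, p x ≤ C * ‖x‖ := by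
  classical
  set e : Fin n → EuclideanSpace ℝ (Fin n) := fun i => EuclideanSpace.single i 1 with he
  have hx : ∀ x : EuclideanSpace ℝ (Fin n), x = ∑ i, x i • e i := by
    intro x
    have := (EuclideanSpace.basisFun (Fin n) ℝ).sum_repr x
    simp only [EuclideanSpace.basisFun_repr, EuclideanSpace.basisFun_apply] at this
    exact this.symm
  have hcoord : ∀ (x : EuclideanSpace ℝ (Fin n)) (i : Fin n), |x i| ≤ ‖x‖ := by
    intro x i
    rw [EuclideanSpace.norm_eq, ← Real.sqrt_sq_eq_abs]
    apply Real.sqrt_le_sqrt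
    have := Finset.single_le_sum (f := fun j => ‖x j‖ ^ 2) (fun j _ => by positivity)
      (Finset.mem_univ i)
    simpa [Real.norm_eq_abs, sq_abs] using this
  refine ⟨∑ i, p (e i), Finset.sum_nonneg (fun i _ => isNorm_nonneg p hp _), fun x => ?_⟩
  calc p x = p (∑ i, x i • e i) := by rw [← hx x]
    _ ≤ ∑ i, p (x i • e i) := Finset.le_sum_of_subadditive p ((hp.2.2 0).2 rfl).le hp.1 _ _
    _ = ∑ i, |x i| * p (e i) := by
        apply Finset.sum_congr rfl; intro i _; exact hp.2.1 _ _
    _ ≤ ∑ i, ‖x‖ * p (e i) := Finset.sum_le_sum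
        (fun i _ => mul_le_mul_of_nonneg_right (hcoord x i) (isNorm_nonneg p hp _))
    _ = (∑ i, p (e i)) * ‖x‖ := by rw [← Finset.mul_sum, mul_comm]

lemma isNorm_lower {n : ℕ} (p : EuclideanSpace ℝ (Fin n) → ℝ) (hp : IsNorm p) :
    ∃ c, 0 < c ∧ ∀ x, c * ‖x‖ ≤ p x := by
  obtain ⟨C, hC0, hub⟩ := isNorm_upper p hp
  have hcont : Continuous p := by
    have hlip : LipschitzWith (Real.toNNReal C) p := by
      apply LipschitzWith.of_dist_le_mul
      intro x y
      rw [Real.dist_eq, dist_eq_norm]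
      have h1 : p x - p y ≤ p (x - y) := by
        have := hp.1 (x - y) y; rw [sub_add_cancel] at this; linarith
      have hpneg : p (y - x) = p (x - y) := by
        have := hp.2.1 (-1) (x - y); simpa [neg_sub] using this
      have h2 : p y - p x ≤ p (x - y) := by
        have := hp.1 (y - x) x; rw [sub_add_cancel] at this; linarith
      have h3 : p (x - y) ≤ C * ‖x - y‖ := hub _
      rw [Real.coe_toNNReal C hC0, abs_sub_le_iff]
      constructor <;> linarith
    exact hlip.continuous
  rcases isEmpty_or_nonempty (Fin n) with he | hne
  · refine ⟨1, one_pos, fun x => ?_⟩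
    have hx : x = 0 := Subsingleton.elim x 0
    simp [hx, (hp.2.2 0).2 rfl]
  · have hsne : (Metric.sphere (0 : EuclideanSpace ℝ (Fin n)) 1).Nonempty := by
      obtain ⟨i⟩ := hne
      exact ⟨EuclideanSpace.single i (1 : ℝ), by
        simp [mem_sphere_zero_iff_norm, EuclideanSpace.norm_single]⟩
    obtain ⟨x₀, hx₀s, hx₀min⟩ :=
      (isCompact_sphere (0 : EuclideanSpace ℝ (Fin n)) 1).exists_isMinOn hsne hcont.continuousOn
    have hx₀n : ‖x₀‖ = 1 := mem_sphere_zero_iff_norm.1 hx₀s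
    have hx₀0 : x₀ ≠ 0 := by intro h; rw [h] at hx₀n; simp at hx₀n
    have hc : 0 < p x₀ :=
      lt_of_le_of_ne (isNorm_nonneg p hp _) (fun h => hx₀0 ((hp.2.2 x₀).1 h.symm))
    refine ⟨p x₀, hc, fun x => ?_⟩
    by_cases hx : x = 0
    · simp [hx, (hp.2.2 0).2 rfl]
    · have hxn : 0 < ‖x‖ := norm_pos_iff.2 hx
      have hmem : ‖x‖⁻¹ • x ∈ Metric.sphere (0 : EuclideanSpace ℝ (Fin n)) 1 := by
        rw [mem_sphere_zero_iff_norm, norm_smul, Real.norm_eq_abs,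
          abs_of_nonneg (inv_nonneg.2 hxn.le), inv_mul_cancel₀ hxn.ne']
      have hle : p x₀ ≤ p (‖x‖⁻¹ • x) := (isMinOn_iff.1 hx₀min) _ hmem
      rw [hp.2.1, abs_of_nonneg (inv_nonneg.2 hxn.le)] at hle
      have h5 := mul_le_mul_of_nonneg_right hle hxn.le
      rw [mul_comm (‖x‖⁻¹) (p x), mul_assoc, inv_mul_cancel₀ hxn.ne', mul_one] at h5
      linarith

lemma inner_le_dualNorm {n : ℕ} (p : EuclideanSpace ℝ (Fin n) → ℝ) (hp : IsNorm p)
    (z β : EuclideanSpace ℝ (Fin n)) : ⟪z, β⟫ ≤ dualNorm p z * p β := by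
  obtain ⟨c, hc, hlow⟩ := isNorm_lower p hp
  have hbdd : BddAbove {r : ℝ | ∃ β : EuclideanSpace ℝ (Fin n), p β ≤ 1 ∧ r = ⟪z, β⟫} := by
    refine ⟨‖z‖ / c, ?_⟩
    rintro r ⟨β, hβ, rfl⟩
    have h1 : ⟪z, β⟫ ≤ ‖z‖ * ‖β‖ := real_inner_le_norm z β
    have h2 : c * ‖β‖ ≤ 1 := le_trans (hlow β) hβ
    have h3 : ‖β‖ ≤ 1 / c := by rw [le_div_iff₀ hc]; linarith
    have h4 : ‖z‖ * ‖β‖ ≤ ‖z‖ * (1 / c) :=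
      mul_le_mul_of_nonneg_left h3 (norm_nonneg z)
    calc ⟪z, β⟫ ≤ ‖z‖ * (1 / c) := le_trans h1 h4
      _ = ‖z‖ / c := by ring
  by_cases hβ0 : p β = 0
  · have hb : β = 0 := (hp.2.2 β).1 hβ0
    rw [hβ0, mul_zero, hb, inner_zero_right]
  · have hpβ : 0 < p β := lt_of_le_of_ne (isNorm_nonneg p hp β) (Ne.symm hβ0)
    have hmem : ⟪z, (p β)⁻¹ • β⟫ ∈
        {r : ℝ | ∃ β : EuclideanSpace ℝ (Fin n), p β ≤ 1 ∧ r = ⟪z, β⟫} := by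
      refine ⟨(p β)⁻¹ • β, ?_, rfl⟩
      rw [hp.2.1, abs_of_nonneg (inv_nonneg.2 hpβ.le), inv_mul_cancel₀ hpβ.ne']
    have hsup : ⟪z, (p β)⁻¹ • β⟫ ≤ dualNorm p z := le_csSup hbdd hmem
    rw [real_inner_smul_right] at hsup
    have h6 := mul_le_mul_of_nonneg_left hsup hpβ.le
    rw [← mul_assoc, mul_inv_cancel₀ hpβ.ne', one_mul] at h6
    linarith [h6]


set_option maxHeartbeats 1000000 in
/-- upper bound on `⟨ε̂, X(β⁰ − β̂)⟩`. -/
theorem inner_residual_bound {m n : ℕ} (X : Matrix (Fin m) (Fin n) ℝ)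
    (β0 : EuclideanSpace ℝ (Fin n)) (ε : EuclideanSpace ℝ (Fin m))
    (b : EuclideanSpace ℝ (Fin m)) (hb : b = mulVecE X β0 + ε)
    (p : EuclideanSpace ℝ (Fin n) → ℝ) (hp : IsNorm p)
    (lam σ τ : ℝ) (hlam : 0 < lam) (hσ : 0 ≤ σ) (hτ : 0 ≤ τ)
    (βh : EuclideanSpace ℝ (Fin n))
    (hmin : ∀ β : EuclideanSpace ℝ (Fin n),
      ‖mulVecE X βh - b‖ + lam * p βh + σ / 2 * ‖βh‖ ^ 2 +
          τ / 2 * ‖mulVecE X βh - b‖ ^ 2 ≤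
        ‖mulVecE X β - b‖ + lam * p β + σ / 2 * ‖β‖ ^ 2 +
          τ / 2 * ‖mulVecE X β - b‖ ^ 2)
    (εh : EuclideanSpace ℝ (Fin m)) (hεh : εh = b - mulVecE X βh)
    (hεhne : ‖εh‖ ≠ 0) :
    ⟪εh, mulVecE X (β0 - βh)⟫ ≤
      (τ + 1 / ‖εh‖)⁻¹ * (lam * p β0 + σ * dualNorm p β0 * p βh) := by
  set d : EuclideanSpace ℝ (Fin n) := β0 - βh with hd
  set v : EuclideanSpace ℝ (Fin m) := mulVecE X d with hv
  set I : ℝ := ⟪εh, v⟫ with hI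
  set r : ℝ := ‖εh‖ with hrdef
  have hr : 0 < r := lt_of_le_of_ne (norm_nonneg _) (Ne.symm hεhne)
  have hX0 : mulVecE X βh - b = -εh := by rw [hεh]; abel
  -- key per-t inequality
  have key : ∀ t : ℝ, 0 < t → t ≤ 1 →
      I * (1 + r * τ) ≤ r * (lam * (p β0 - p βh) + σ * ⟪βh, d⟫) +
        t * (‖v‖ ^ 2 / 2 + r * σ * ‖d‖ ^ 2 / 2 + r * τ * ‖v‖ ^ 2 / 2) := by
    intro t ht0 ht1
    have H := hmin (βh + t • d)
    have hX1 : mulVecE X (βh + t • d) - b = t • v - εh := by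
      rw [mulVecE_add_smul, hεh, hv]; abel
    rw [hX0, hX1, norm_neg] at H
    set s : ℝ := ‖t • v - εh‖ with hsdef
    have hs0 : 0 ≤ s := norm_nonneg _
    have hsq : s ^ 2 = t ^ 2 * ‖v‖ ^ 2 - 2 * (t * I) + r ^ 2 := by
      have h1 : ‖t • v‖ = |t| * ‖v‖ := by rw [norm_smul, Real.norm_eq_abs]
      have h2 : ⟪t • v, εh⟫ = t * I := by
        rw [real_inner_smul_left, hI, real_inner_comm]
      rw [hsdef, norm_sub_sq_real, h1, h2, mul_pow, sq_abs, hrdef]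
    have hsq2 : ‖βh + t • d‖ ^ 2 = ‖βh‖ ^ 2 + 2 * (t * ⟪βh, d⟫) + t ^ 2 * ‖d‖ ^ 2 := by
      have h1 : ‖t • d‖ = |t| * ‖d‖ := by rw [norm_smul, Real.norm_eq_abs]
      have h2 : ⟪βh, t • d⟫ = t * ⟪βh, d⟫ := real_inner_smul_right _ _ _
      rw [norm_add_sq_real, h1, h2, mul_pow, sq_abs]
    have hps : p (βh + t • d) ≤ (1 - t) * p βh + t * p β0 := by
      have hrepr : βh + t • d = (1 - t) • βh + t • β0 := by
        rw [hd, smul_sub, sub_smul, one_smul]; abel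
      calc p (βh + t • d) = p ((1 - t) • βh + t • β0) := by rw [hrepr]
        _ ≤ p ((1 - t) • βh) + p (t • β0) := hp.1 _ _
        _ = |1 - t| * p βh + |t| * p β0 := by rw [hp.2.1, hp.2.1]
        _ = (1 - t) * p βh + t * p β0 := by
            rw [abs_of_nonneg (by linarith), abs_of_nonneg ht0.le]
    have h2' : lam * p (βh + t • d) ≤ lam * ((1 - t) * p βh + t * p β0) :=
      mul_le_mul_of_nonneg_left hps hlam.le
    rw [hsq, hsq2] at H
    have h1' : 2 * r * s ≤ 2 * r ^ 2 + (t ^ 2 * ‖v‖ ^ 2 - 2 * (t * I)) := by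
      nlinarith [sq_nonneg (r - s)]
    have Ha : r ≤ s + (lam * t * p β0 - lam * t * p βh + σ * (t * ⟪βh, d⟫)
        + σ * t ^ 2 * ‖d‖ ^ 2 / 2 + τ * t ^ 2 * ‖v‖ ^ 2 / 2 - τ * (t * I)) := by
      linarith [H, h2']
    have Hb := mul_le_mul_of_nonneg_left Ha (by positivity : (0:ℝ) ≤ 2 * r)
    have h2t : (0:ℝ) < 2 * t := by linarith
    apply le_of_mul_le_mul_left _ h2t
    linarith [Hb, h1']
  -- take t → 0
  have hfin : I * (1 + r * τ) ≤ r * (lam * (p β0 - p βh) + σ * ⟪βh, d⟫) := by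
    set C2 : ℝ := ‖v‖ ^ 2 / 2 + r * σ * ‖d‖ ^ 2 / 2 + r * τ * ‖v‖ ^ 2 / 2 with hC2def
    have hC2 : 0 ≤ C2 := by
      have a1 : (0:ℝ) ≤ ‖v‖ ^ 2 / 2 := by positivity
      have a2 : (0:ℝ) ≤ r * σ * ‖d‖ ^ 2 / 2 :=
        div_nonneg (mul_nonneg (mul_nonneg hr.le hσ) (sq_nonneg _)) (by norm_num)
      have a3 : (0:ℝ) ≤ r * τ * ‖v‖ ^ 2 / 2 :=
        div_nonneg (mul_nonneg (mul_nonneg hr.le hτ) (sq_nonneg _)) (by norm_num)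
      rw [hC2def]; linarith
    apply le_of_forall_pos_le_add
    intro δ hδ
    have htpos : 0 < min 1 (δ / (C2 + 1)) := lt_min one_pos (div_pos hδ (by linarith))
    have hk := key (min 1 (δ / (C2 + 1))) htpos (min_le_left _ _)
    have hle : min 1 (δ / (C2 + 1)) * C2 ≤ δ := by
      have h1 : min 1 (δ / (C2 + 1)) ≤ δ / (C2 + 1) := min_le_right _ _
      have h2 : min 1 (δ / (C2 + 1)) * C2 ≤ (δ / (C2 + 1)) * C2 :=
        mul_le_mul_of_nonneg_right h1 hC2
      have h3 : (δ / (C2 + 1)) * C2 ≤ δ := by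
        rw [div_mul_eq_mul_div, div_le_iff₀ (by linarith : (0:ℝ) < C2 + 1)]
        nlinarith
      linarith
    linarith
  -- bound the inner product term by the dual norm
  have hdual : ⟪β0, βh⟫ ≤ dualNorm p β0 * p βh := inner_le_dualNorm p hp β0 βh
  have hinner : ⟪βh, d⟫ = ⟪β0, βh⟫ - ‖βh‖ ^ 2 := by
    rw [hd, inner_sub_right, real_inner_self_eq_norm_sq, real_inner_comm]
  have hM : lam * (p β0 - p βh) + σ * ⟪βh, d⟫ ≤
      lam * p β0 + σ * (dualNorm p β0 * p βh) := by
    have h2 : σ * ⟪βh, d⟫ ≤ σ * (dualNorm p β0 * p βh) := by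
      rw [hinner]
      have ha := mul_le_mul_of_nonneg_left hdual hσ
      have hb2 : 0 ≤ σ * ‖βh‖ ^ 2 := mul_nonneg hσ (sq_nonneg _)
      nlinarith
    have h3 : lam * (p β0 - p βh) ≤ lam * p β0 := by
      have := mul_nonneg hlam.le (isNorm_nonneg p hp βh)
      nlinarith
    linarith
  have hfin2 : I * (1 + r * τ) ≤ r * (lam * p β0 + σ * (dualNorm p β0 * p βh)) :=
    le_trans hfin (mul_le_mul_of_nonneg_left hM hr.le)
  have hpos : 0 < 1 + r * τ := by nlinarith [mul_nonneg hr.le hτ]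
  have hinv : (τ + 1 / r)⁻¹ = r / (1 + r * τ) := by
    rw [show τ + 1 / r = (1 + r * τ) / r by field_simp; ring, inv_div]
  rw [hinv, div_mul_eq_mul_div, le_div_iff₀ hpos]
  nlinarith [hfin2]
end
end

section
/- Let X ∈ ℝ^{m×n}, β⁰ ∈ ℝⁿ, ε ∈ ℝ^m, b = Xβ⁰ + ε, p a norm on ℝⁿ, λ > 0, σ ≥ 0, τ ≥ 0, and let β̂ minimize F(β) = ‖Xβ − b‖ + λ p(β) + (σ/2)‖β‖² + (τ/2)‖Xβ − b‖² over ℝⁿ. Set ε̂ = b − Xβ̂. Then both ‖ε̂‖ and λ p(β̂) are bounded above by ‖ε‖ + (τ/2)‖ε‖² + ( λ + σ p_*(β⁰)/2 ) p(β⁰), where p_* is the dual norm of p. -/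
open scoped RealInnerProductSpace

noncomputable section

section aux
variable {n : ℕ} {p : EuclideanSpace ℝ (Fin n) → ℝ} (hp : IsNorm p)
include hp

lemma pzero : p 0 = 0 := (hp.2.2 0).mpr rfl

lemma pnonneg (x : EuclideanSpace ℝ (Fin n)) : 0 ≤ p x := by
  have h1 := hp.1 x (-x)
  have h2 : p (-x) = p x := by
    have := hp.2.1 (-1) x; simpa using this
  have h0 : p 0 = 0 := pzero hp
  simp only [add_neg_cancel, h0, h2] at h1
  linarith

lemma pdiff (x y : EuclideanSpace ℝ (Fin n)) : p x ≤ p y + p (x - y) := by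
  have h : y + (x - y) = x := by abel
  calc p x = p (y + (x - y)) := by rw [h]
    _ ≤ p y + p (x - y) := hp.1 _ _

lemma psub_symm (x y : EuclideanSpace ℝ (Fin n)) : p (x - y) = p (y - x) := by
  have := hp.2.1 (-1) (y - x); simpa [neg_sub] using this

lemma plipabs (x y : EuclideanSpace ℝ (Fin n)) : |p x - p y| ≤ p (x - y) := by
  rw [abs_sub_le_iff]
  constructor
  · linarith [pdiff hp x y]
  · have := pdiff hp y x
    rw [psub_symm hp y x] at this
    linarith

omit hp in
lemma coord_abs_le_norm (x : EuclideanSpace ℝ (Fin n)) (i : Fin n) : |x i| ≤ ‖x‖ := by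
  have h : ⟪EuclideanSpace.single i (1:ℝ), x⟫ = x i := by
    simp [EuclideanSpace.inner_single_left]
  calc |x i| = |⟪EuclideanSpace.single i (1:ℝ), x⟫| := by rw [h]
    _ ≤ ‖EuclideanSpace.single i (1:ℝ)‖ * ‖x‖ := abs_real_inner_le_norm _ _
    _ = ‖x‖ := by simp [EuclideanSpace.norm_single]

lemma psum {s : Finset (Fin n)} {f : Fin n → EuclideanSpace ℝ (Fin n)} :
    p (∑ i ∈ s, f i) ≤ ∑ i ∈ s, p (f i) := by
  classical
  induction s using Finset.induction_on with
  | empty => simp [pzero hp]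
  | insert _ _ hns ih =>
    rename_i a s
    rw [Finset.sum_insert hns, Finset.sum_insert hns]
    calc p (f a + ∑ i ∈ s, f i) ≤ p (f a) + p (∑ i ∈ s, f i) := hp.1 _ _
      _ ≤ p (f a) + ∑ i ∈ s, p (f i) := by linarith

lemma pupper : ∃ C : ℝ, 0 < C ∧ ∀ x, p x ≤ C * ‖x‖ := by
  classical
  set C := ∑ i, p (EuclideanSpace.single i (1:ℝ)) with hCdef
  have hC0 : 0 ≤ C := Finset.sum_nonneg fun i _ => pnonneg hp _
  refine ⟨C + 1, by linarith, fun x => ?_⟩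
  have hx : ∑ i, (x i) • EuclideanSpace.single i (1:ℝ) = x := by
    have := (EuclideanSpace.basisFun (Fin n) ℝ).sum_repr x
    simpa [EuclideanSpace.basisFun_apply, EuclideanSpace.basisFun_repr] using this
  calc p x = p (∑ i, (x i) • EuclideanSpace.single i (1:ℝ)) := by rw [hx]
    _ ≤ ∑ i, p ((x i) • EuclideanSpace.single i (1:ℝ)) := psum hp
    _ ≤ ∑ i, p (EuclideanSpace.single i (1:ℝ)) * ‖x‖ := by
        apply Finset.sum_le_sum; intro i _
        rw [hp.2.1, mul_comm (p _) ‖x‖]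
        exact mul_le_mul_of_nonneg_right (coord_abs_le_norm x i) (pnonneg hp _)
    _ = C * ‖x‖ := (Finset.sum_mul _ _ _).symm
    _ ≤ (C + 1) * ‖x‖ := by nlinarith [norm_nonneg x]

lemma pcont : Continuous p := by
  obtain ⟨C, hC0, hC⟩ := pupper hp
  rw [Metric.continuous_iff]
  intro x ε hε
  refine ⟨ε / C, div_pos hε hC0, fun y hy => ?_⟩
  calc dist (p y) (p x) = |p y - p x| := Real.dist_eq _ _
    _ ≤ p (y - x) := plipabs hp y x
    _ ≤ C * ‖y - x‖ := hC _
    _ < C * (ε / C) := by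
        apply mul_lt_mul_of_pos_left _ hC0
        rw [← dist_eq_norm]; exact hy
    _ = ε := by field_simp

lemma plower (x0 : EuclideanSpace ℝ (Fin n)) (hx0 : x0 ≠ 0) :
    ∃ c : ℝ, 0 < c ∧ ∀ x, c * ‖x‖ ≤ p x := by
  have hsne : (Metric.sphere (0 : EuclideanSpace ℝ (Fin n)) 1).Nonempty := by
    refine ⟨‖x0‖⁻¹ • x0, ?_⟩
    simp [norm_smul, abs_inv, inv_mul_cancel₀ (norm_ne_zero_iff.mpr hx0)]
  obtain ⟨z, hz, hzmin⟩ := (isCompact_sphere (0 : EuclideanSpace ℝ (Fin n)) 1).exists_isMinOn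
    hsne ((pcont hp).continuousOn)
  have hz1 : ‖z‖ = 1 := by simpa using hz
  have hzne : z ≠ 0 := by intro h; rw [h] at hz1; simp at hz1
  have hpz : 0 < p z := by
    rcases lt_or_eq_of_le (pnonneg hp z) with h | h
    · exact h
    · exact absurd ((hp.2.2 z).mp h.symm) hzne
  refine ⟨p z, hpz, fun x => ?_⟩
  rcases eq_or_ne x 0 with rfl | hx
  · simp [pzero hp]
  · have hnx : (0:ℝ) < ‖x‖ := norm_pos_iff.mpr hx
    have hmem : ‖x‖⁻¹ • x ∈ Metric.sphere (0 : EuclideanSpace ℝ (Fin n)) 1 := by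
      simp [norm_smul, abs_inv, inv_mul_cancel₀ (ne_of_gt hnx)]
    have h1 : p z ≤ p (‖x‖⁻¹ • x) := hzmin hmem
    have hps : p (‖x‖⁻¹ • x) = ‖x‖⁻¹ * p x := by
      rw [hp.2.1]; congr 1; rw [abs_inv, abs_norm]
    rw [hps] at h1
    have h2 : p z * ‖x‖ ≤ ‖x‖⁻¹ * p x * ‖x‖ := mul_le_mul_of_nonneg_right h1 hnx.le
    calc p z * ‖x‖ ≤ ‖x‖⁻¹ * p x * ‖x‖ := h2
      _ = p x := by field_simp

lemma key_ineq (z : EuclideanSpace ℝ (Fin n)) : ‖z‖ ^ 2 ≤ dualNorm p z * p z := by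
  rcases eq_or_ne z 0 with rfl | hz
  · simp [pzero hp]
  · obtain ⟨c, hc, hcl⟩ := plower hp z hz
    have hbdd : BddAbove {r : ℝ | ∃ β : EuclideanSpace ℝ (Fin n), p β ≤ 1 ∧ r = ⟪z, β⟫} := by
      refine ⟨‖z‖ * c⁻¹, fun r hr => ?_⟩
      obtain ⟨β, hβ, rfl⟩ := hr
      have hβn : ‖β‖ ≤ c⁻¹ := by
        have h1 := hcl β
        rw [← one_div, le_div_iff₀ hc]
        nlinarith
      calc ⟪z, β⟫ ≤ |⟪z, β⟫| := le_abs_self _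
        _ ≤ ‖z‖ * ‖β‖ := abs_real_inner_le_norm _ _
        _ ≤ ‖z‖ * c⁻¹ := mul_le_mul_of_nonneg_left hβn (norm_nonneg _)
    have hpz : 0 < p z := by
      rcases lt_or_eq_of_le (pnonneg hp z) with h | h
      · exact h
      · exact absurd ((hp.2.2 z).mp h.symm) hz
    have hmem : ⟪z, (p z)⁻¹ • z⟫ ∈
        {r : ℝ | ∃ β : EuclideanSpace ℝ (Fin n), p β ≤ 1 ∧ r = ⟪z, β⟫} := by
      refine ⟨(p z)⁻¹ • z, ?_, rfl⟩
      rw [hp.2.1, abs_inv, abs_of_pos hpz, inv_mul_cancel₀ (ne_of_gt hpz)]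
    have hle := le_csSup hbdd hmem
    have hinner : ⟪z, (p z)⁻¹ • z⟫ = (p z)⁻¹ * ‖z‖ ^ 2 := by
      rw [real_inner_smul_right, real_inner_self_eq_norm_sq]
    rw [hinner] at hle
    have h3 := mul_le_mul_of_nonneg_right hle hpz.le
    calc ‖z‖ ^ 2 = (p z)⁻¹ * ‖z‖ ^ 2 * p z := by field_simp
      _ ≤ dualNorm p z * p z := h3

end aux

/-- upper bounds on `‖ε̂‖` and `λ p(β̂)`. -/
theorem residual_and_penalty_upper_bound {m n : ℕ} (X : Matrix (Fin m) (Fin n) ℝ)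
    (β0 : EuclideanSpace ℝ (Fin n)) (ε : EuclideanSpace ℝ (Fin m))
    (b : EuclideanSpace ℝ (Fin m)) (hb : b = mulVecE X β0 + ε)
    (p : EuclideanSpace ℝ (Fin n) → ℝ) (hp : IsNorm p)
    (lam σ τ : ℝ) (hlam : 0 < lam) (hσ : 0 ≤ σ) (hτ : 0 ≤ τ)
    (βh : EuclideanSpace ℝ (Fin n))
    (hmin : ∀ β : EuclideanSpace ℝ (Fin n),
      ‖mulVecE X βh - b‖ + lam * p βh + σ / 2 * ‖βh‖ ^ 2 +
          τ / 2 * ‖mulVecE X βh - b‖ ^ 2 ≤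
        ‖mulVecE X β - b‖ + lam * p β + σ / 2 * ‖β‖ ^ 2 +
          τ / 2 * ‖mulVecE X β - b‖ ^ 2)
    (εh : EuclideanSpace ℝ (Fin m)) (hεh : εh = b - mulVecE X βh) :
    ‖εh‖ ≤ ‖ε‖ + τ / 2 * ‖ε‖ ^ 2 + (lam + σ * dualNorm p β0 / 2) * p β0 ∧
      lam * p βh ≤ ‖ε‖ + τ / 2 * ‖ε‖ ^ 2 + (lam + σ * dualNorm p β0 / 2) * p β0 := by
  have hXβ0 : mulVecE X β0 - b = -ε := by rw [hb]; abel
  have hnε0 : ‖mulVecE X β0 - b‖ = ‖ε‖ := by rw [hXβ0, norm_neg]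
  have hmin0 := hmin β0
  rw [hnε0] at hmin0
  have hkey : ‖β0‖ ^ 2 ≤ dualNorm p β0 * p β0 := key_ineq hp β0
  have hεh' : ‖εh‖ = ‖mulVecE X βh - b‖ := by rw [hεh, norm_sub_rev]
  have h1 : 0 ≤ lam * p βh := mul_nonneg hlam.le (pnonneg hp βh)
  have h2 : 0 ≤ σ / 2 * ‖βh‖ ^ 2 := by positivity
  have h3 : 0 ≤ τ / 2 * ‖mulVecE X βh - b‖ ^ 2 := by positivity
  have h4 : 0 ≤ ‖mulVecE X βh - b‖ := norm_nonneg _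
  have hσk : σ / 2 * ‖β0‖ ^ 2 ≤ σ / 2 * (dualNorm p β0 * p β0) :=
    mul_le_mul_of_nonneg_left hkey (by linarith)
  have hRHS : ‖ε‖ + lam * p β0 + σ / 2 * ‖β0‖ ^ 2 + τ / 2 * ‖ε‖ ^ 2
      ≤ ‖ε‖ + τ / 2 * ‖ε‖ ^ 2 + (lam + σ * dualNorm p β0 / 2) * p β0 := by
    have : (lam + σ * dualNorm p β0 / 2) * p β0
        = lam * p β0 + σ / 2 * (dualNorm p β0 * p β0) := by ring
    rw [this]; linarith
  constructor
  · rw [hεh']; linarith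
  · linarith
end
end

section
/- Let X ∈ ℝ^{m×n}, b ∈ ℝ^m, λ > 0, let p₁ be a norm on ℝⁿ, and let p₂ : ℝⁿ → ℝ be a convex differentiable function. Define g(β) = ‖Xβ − b‖ + λ p₁(β) − p₂(β). Fix σ > 0, τ > 0 and β^k ∈ ℝⁿ, and define h_k(β) = ‖Xβ − b‖ + λ p₁(β) − p₂(β^k) − ⟨∇p₂(β^k), β − β^k⟩ + (σ/2)‖β − β^k‖² + (τ/2)‖Xβ − Xβ^k‖². Suppose β^{k+1} ≠ β^k, that −δ is a subgradient of h_k at β^{k+1} for some δ ∈ ℝⁿ with ‖δ‖ ≤ (σ/4)‖β^{k+1} − β^k‖ + τ‖X(β^{k+1} − β^k)‖²/(2‖β^{k+1} − β^k‖). Then g(β^k) ≥ g(β^{k+1}) + (σ/4)‖β^{k+1} − β^k‖². -/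
open scoped RealInnerProductSpace

noncomputable section


lemma grad_ineq {F : Type*} [NormedAddCommGroup F] [InnerProductSpace ℝ F] [CompleteSpace F]
    (p2 : F → ℝ) (hconv : ConvexOn ℝ Set.univ p2)
    (hdiff : ∀ x, DifferentiableAt ℝ p2 x) (x y : F) :
    p2 x + ⟪gradient p2 x, y - x⟫ ≤ p2 y := by
  rcases eq_or_ne y x with rfl | hxy
  · simp
  · set d := y - x with hd
    have heq : (fun t : ℝ => p2 (x + t • d)) = p2 ∘ (AffineMap.lineMap x y) := by
      funext t; rw [Function.comp]; simp [AffineMap.lineMap_apply, hd, add_comm]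
    have hφ : ConvexOn ℝ Set.univ (fun t : ℝ => p2 (x + t • d)) := by
      have := hconv.comp_affineMap (AffineMap.lineMap x y : ℝ →ᵃ[ℝ] F)
      rw [Set.preimage_univ] at this
      rw [heq]; exact this
    have hF : HasFDerivAt p2 (InnerProductSpace.toDual ℝ F (gradient p2 x)) x :=
      (hdiff x).hasGradientAt
    have hF' : HasFDerivAt p2 (InnerProductSpace.toDual ℝ F (gradient p2 x))
        ((fun t : ℝ => x + t • d) 0) := by simpa using hF
    have hc : HasDerivAt (fun t : ℝ => x + t • d) d 0 := by
      simpa using ((hasDerivAt_id (0:ℝ)).smul_const d).const_add x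
    have hφ' : HasDerivAt (fun t : ℝ => p2 (x + t • d)) ⟪gradient p2 x, d⟫ 0 := by
      have := hF'.comp_hasDerivAt 0 hc
      simpa [InnerProductSpace.toDual_apply_apply, Function.comp_def] using this
    have hle := hφ.le_slope_of_hasDerivAt (Set.mem_univ (0:ℝ)) (Set.mem_univ (1:ℝ))
      zero_lt_one hφ'
    have hs : slope (fun t : ℝ => p2 (x + t • d)) 0 1 = p2 y - p2 x := by
      simp [slope_def_field, hd]
    rw [hs] at hle
    linarith


/-- sufficient decrease of `g` along the PMM iterates. -/
theorem pmm_sufficient_decrease {m n : ℕ} (X : Matrix (Fin m) (Fin n) ℝ)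
    (b : EuclideanSpace ℝ (Fin m)) (lam : ℝ) (hlam : 0 < lam)
    (p1 : EuclideanSpace ℝ (Fin n) → ℝ) (hp1 : IsNorm p1)
    (p2 : EuclideanSpace ℝ (Fin n) → ℝ) (hp2conv : ConvexOn ℝ Set.univ p2)
    (hp2diff : ∀ x, DifferentiableAt ℝ p2 x)
    (σ τ : ℝ) (hσ : 0 < σ) (hτ : 0 < τ)
    (βk βk1 δ : EuclideanSpace ℝ (Fin n)) (hne : βk1 ≠ βk)
    (g hk : EuclideanSpace ℝ (Fin n) → ℝ)
    (hg : ∀ β, g β = ‖mulVecE X β - b‖ + lam * p1 β - p2 β)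
    (hhk : ∀ β, hk β = ‖mulVecE X β - b‖ + lam * p1 β - p2 βk -
      ⟪gradient p2 βk, β - βk⟫ + σ / 2 * ‖β - βk‖ ^ 2 +
      τ / 2 * ‖mulVecE X β - mulVecE X βk‖ ^ 2)
    (hsub : ∀ y : EuclideanSpace ℝ (Fin n), hk βk1 + ⟪-δ, y - βk1⟫ ≤ hk y)
    (hδ : ‖δ‖ ≤ σ / 4 * ‖βk1 - βk‖ +
      τ * ‖mulVecE X (βk1 - βk)‖ ^ 2 / (2 * ‖βk1 - βk‖)) :
    g βk1 + σ / 4 * ‖βk1 - βk‖ ^ 2 ≤ g βk := by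
  have hDpos : (0:ℝ) < ‖βk1 - βk‖ := by
    simpa [sub_eq_zero] using norm_pos_iff.mpr (sub_ne_zero.mpr hne)
  have hXd : mulVecE X (βk1 - βk) = mulVecE X βk1 - mulVecE X βk := by
    ext i
    simp [mulVecE, Matrix.mulVec, dotProduct, PiLp.sub_apply, mul_sub,
      Finset.sum_sub_distrib]
  have hkβk : hk βk = g βk := by simp [hhk, hg]
  have hsub' := hsub βk
  rw [hkβk] at hsub'
  have hgrad := grad_ineq p2 hp2conv hp2diff βk βk1
  have hklb : g βk1 + σ / 2 * ‖βk1 - βk‖ ^ 2 +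
      τ / 2 * ‖mulVecE X βk1 - mulVecE X βk‖ ^ 2 ≤ hk βk1 := by
    rw [hhk, hg]; linarith
  have hinner : -(‖δ‖ * ‖βk1 - βk‖) ≤ ⟪-δ, βk - βk1⟫ := by
    have h1 : ⟪-δ, βk - βk1⟫ = ⟪δ, βk1 - βk⟫ := by
      simp [inner_sub_right]; ring
    have h2 := abs_real_inner_le_norm δ (βk1 - βk)
    have h3 := neg_abs_le ⟪δ, βk1 - βk⟫
    rw [h1]; linarith
  rw [hXd] at hδ
  have hδD : ‖δ‖ * ‖βk1 - βk‖ ≤ σ / 4 * ‖βk1 - βk‖ ^ 2 +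
      τ / 2 * ‖mulVecE X βk1 - mulVecE X βk‖ ^ 2 := by
    have hmul := mul_le_mul_of_nonneg_right hδ hDpos.le
    have heq : τ * ‖mulVecE X βk1 - mulVecE X βk‖ ^ 2 / (2 * ‖βk1 - βk‖) * ‖βk1 - βk‖
        = τ / 2 * ‖mulVecE X βk1 - mulVecE X βk‖ ^ 2 := by
      field_simp
    nlinarith [hmul, heq]
  linarith
end
end
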